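/- arXiv:1407.0727 — 3 statements merged into one kernel-verified Lean document; each statement's English description precedes it below -/
import Mathlib

section
/- Fix n ≥ 1, constants x_b > 0, ρ > 0, θ_i ≥ 0, and fix the other players' votes x_j ∈ [0, x_b] for j ≠ i. Then the function x_i ↦ f_i(x_i, x_{-i}) = -(x̄ - x_i)² + θ_i · ln(ρ(x_b - x_i)/(n x_b - Σ_{j=1}^n x_j)) is concave on the interval [0, x_b). -/
open Set

/-- Transfer concavity along pointwise equality on the set. -/
lemma concaveOn_congr' {s : Set ℝ} {f g : ℝ → ℝ} (hg : ConcaveOn ℝ s g)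
    (hfg : ∀ t ∈ s, f t = g t) : ConcaveOn ℝ s f := by
  refine ⟨hg.1, fun a ha b hb p q hp hq hpq => ?_⟩
  rw [hfg a ha, hfg b hb, hfg _ (hg.1 ha hb hp hq hpq)]
  exact hg.2 ha hb hp hq hpq

/-- `t ↦ -(a t + b)²` is concave on any convex set. -/
lemma concaveOn_neg_sq_affine {s : Set ℝ} (hs : Convex ℝ s) (a b : ℝ) :
    ConcaveOn ℝ s (fun t => -(a * t + b) ^ 2) := by
  refine ⟨hs, fun x _ y _ p q hp hq hpq => ?_⟩
  simp only [smul_eq_mul]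
  have hq1 : q = 1 - p := by linarith
  subst hq1
  nlinarith [mul_nonneg (mul_nonneg hp hq) (sq_nonneg (a * x - a * y))]

/-- `t ↦ -c / (D - t)` is concave on a set where `D - t > 0`, for `c ≥ 0`. -/
lemma concaveOn_neg_div {s : Set ℝ} (hs : Convex ℝ s) (c D : ℝ) (hc : 0 ≤ c)
    (hD : ∀ t ∈ s, 0 < D - t) :
    ConcaveOn ℝ s (fun t => -(c / (D - t))) := by
  refine ⟨hs, fun x hx y hy p q hp hq hpq => ?_⟩
  have hxD := hD x hx
  have hyD := hD y hy
  have hzD := hD _ (hs hx hy hp hq hpq)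
  simp only [smul_eq_mul] at hzD
  simp only [smul_eq_mul, mul_neg, ← neg_add]
  rw [neg_le_neg_iff]
  have hsum : p * (c / (D - x)) + q * (c / (D - y))
      = (p * c * (D - y) + q * c * (D - x)) / ((D - x) * (D - y)) := by
    field_simp
  rw [hsum, div_le_div_iff₀ hzD (mul_pos hxD hyD)]
  have hq1 : q = 1 - p := by linarith
  subst hq1
  nlinarith [mul_nonneg hc (mul_nonneg (mul_nonneg hp hq) (sq_nonneg (x - y)))]

/-- Composition of `log` with a positive concave function is concave. -/
lemma concaveOn_log_comp {s : Set ℝ} {f : ℝ → ℝ} (hf : ConcaveOn ℝ s f)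
    (hpos : ∀ t ∈ s, 0 < f t) : ConcaveOn ℝ s (fun t => Real.log (f t)) := by
  refine ⟨hf.1, fun x hx y hy p q hp hq hpq => ?_⟩
  have hfx := hpos x hx
  have hfy := hpos y hy
  have h1 : p • Real.log (f x) + q • Real.log (f y) ≤ Real.log (p • f x + q • f y) :=
    (strictConcaveOn_log_Ioi.concaveOn).2 (mem_Ioi.2 hfx) (mem_Ioi.2 hfy) hp hq hpq
  refine h1.trans (Real.log_le_log ?_ (hf.2 hx hy hp hq hpq))
  rcases eq_or_lt_of_le hp with h | h
  · simp only [smul_eq_mul, ← h, zero_mul, zero_add]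
    have : q = 1 := by linarith
    simpa [this] using hfy
  · have : 0 ≤ q • f y := mul_nonneg hq hfy.le
    simp only [smul_eq_mul] at *
    nlinarith

/-- Player i's full utility `f_i = ψ_i + θ_i φ_i` is concave in her own vote
on `[0, x_b)`, given the other votes lie in `[0, x_b]` and `θ_i ≥ 0`. -/
theorem utility_concaveOn (n : ℕ) (hn : 1 ≤ n) (xb ρ θ : ℝ)
    (hxb : 0 < xb) (hρ : 0 < ρ) (hθ : 0 ≤ θ)
    (i : Fin n) (x : Fin n → ℝ) (hx : ∀ j, j ≠ i → x j ∈ Icc 0 xb) :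
    ConcaveOn ℝ (Ico 0 xb) (fun t : ℝ =>
      -((1 / (n : ℝ)) * (∑ j, Function.update x i t j) - t) ^ 2
        + θ * Real.log (ρ * (xb - t) / ((n : ℝ) * xb - ∑ j, Function.update x i t j))) := by
  classical
  set S : ℝ := ∑ j ∈ Finset.univ \ {i}, x j with hS
  have hsum : ∀ t : ℝ, (∑ j, Function.update x i t j) = t + S := by
    intro t
    rw [Finset.sum_update_of_mem (Finset.mem_univ i)]
  -- bound on S
  have hScard : (Finset.univ \ {i} : Finset (Fin n)).card = n - 1 := by
    rw [Finset.sdiff_singleton_eq_erase, Finset.card_erase_of_mem (Finset.mem_univ i),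
      Finset.card_univ, Fintype.card_fin]
  have hSle : S ≤ ((n : ℝ) - 1) * xb := by
    have h1 : S ≤ (Finset.univ \ {i} : Finset (Fin n)).card • xb := by
      refine Finset.sum_le_card_nsmul _ _ _ ?_
      intro j hj
      have hji : j ≠ i := by
        simp only [Finset.mem_sdiff, Finset.mem_singleton] at hj
        exact hj.2
      exact (hx j hji).2
    rw [hScard, nsmul_eq_mul] at h1
    refine h1.trans ?_
    have : ((n - 1 : ℕ) : ℝ) = (n : ℝ) - 1 := by
      rw [Nat.cast_sub hn, Nat.cast_one]
    rw [this]
  set D : ℝ := (n : ℝ) * xb - S with hD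
  have hDxb : xb ≤ D := by
    rw [hD]; linarith
  have hDt : ∀ t ∈ Ico (0 : ℝ) xb, 0 < D - t := by
    intro t ht
    have := ht.2
    linarith
  have hconv : Convex ℝ (Ico (0 : ℝ) xb) := convex_Ico 0 xb
  -- the inner concave function for the log part
  have hinner : ConcaveOn ℝ (Ico 0 xb) (fun t => 1 - (D - xb) / (D - t)) := by
    have h1 := concaveOn_neg_div hconv (D - xb) D (by linarith) hDt
    exact concaveOn_congr' ((concaveOn_const 1 hconv).add h1) (fun t _ => by simp only [Pi.add_apply]; ring)
  have hinnerpos : ∀ t ∈ Ico (0 : ℝ) xb, 0 < 1 - (D - xb) / (D - t) := by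
    intro t ht
    have h1 := hDt t ht
    have h2 : (D - xb) / (D - t) < 1 := by
      rw [div_lt_one h1]
      linarith [ht.2]
    linarith
  have hratio : ∀ t ∈ Ico (0 : ℝ) xb, 1 - (D - xb) / (D - t) = (xb - t) / (D - t) := by
    intro t ht
    have h1 := hDt t ht
    field_simp
    ring
  -- concave target function
  have hlog : ConcaveOn ℝ (Ico 0 xb)
      (fun t => θ * (Real.log ρ + Real.log (1 - (D - xb) / (D - t)))) := by
    have h1 := concaveOn_log_comp hinner hinnerpos
    have h2 := (concaveOn_const (Real.log ρ) hconv).add h1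
    have h3 := h2.smul hθ
    exact concaveOn_congr' h3 (fun t _ => by simp [smul_eq_mul])
  have hsq : ConcaveOn ℝ (Ico 0 xb)
      (fun t => -((1 / (n : ℝ) - 1) * t + S / n) ^ 2) :=
    concaveOn_neg_sq_affine hconv _ _
  refine concaveOn_congr' (hsq.add hlog) ?_
  intro t ht
  have h1 := hDt t ht
  have h2 : 0 < xb - t := by linarith [ht.2]
  have h3 : 0 < (xb - t) / (D - t) := div_pos h2 h1
  rw [hsum t]
  have hDen : (n : ℝ) * xb - (t + S) = D - t := by rw [hD]; ring
  have harg : ρ * (xb - t) / ((n : ℝ) * xb - (t + S)) = ρ * ((xb - t) / (D - t)) := by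
    rw [hDen, mul_div_assoc]
  have hfirst : (1 / (n : ℝ)) * (t + S) - t = (1 / (n : ℝ) - 1) * t + S / n := by ring
  rw [hfirst, harg, Real.log_mul (ne_of_gt hρ) (ne_of_gt h3), ← hratio t ht]
  simp only [Pi.add_apply]
end

section
/- Let F : ℝⁿ → ℝⁿ satisfy the strong monotonicity condition ⟨F(x) - F(y), x - y⟩ ≤ -c ‖x - y‖² for all x, y ∈ ℝⁿ, where c > 0, and let x* ∈ ℝⁿ satisfy F(x*) = 0. Then every differentiable curve x : [0, ∞) → ℝⁿ with x'(t) = F(x(t)) for all t ≥ 0 satisfies ‖x(t) - x*‖ ≤ e^{-c t} ‖x(0) - x*‖ for all t ≥ 0; in particular x(t) → x* as t → ∞, so x* is globally asymptotically stable. -/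
open scoped RealInnerProductSpace

/-- Strong monotonicity `⟨F(x) - F(y), x - y⟩ ≤ -c‖x - y‖²` with `F(x*) = 0`
implies every solution of `ẋ = F(x)` converges exponentially to `x*`, which
is thus globally asymptotically stable. -/
theorem global_exp_convergence_of_strong_monotone (n : ℕ) (c : ℝ) (hc : 0 < c)
    (F : EuclideanSpace ℝ (Fin n) → EuclideanSpace ℝ (Fin n))
    (hmono : ∀ x y, ⟪F x - F y, x - y⟫ ≤ -c * ‖x - y‖ ^ 2)
    (xs : EuclideanSpace ℝ (Fin n)) (hzero : F xs = 0)
    (x : ℝ → EuclideanSpace ℝ (Fin n))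
    (hx : ∀ t ≥ (0 : ℝ), HasDerivWithinAt x (F (x t)) (Set.Ici 0) t) :
    (∀ t ≥ (0 : ℝ), ‖x t - xs‖ ≤ Real.exp (-c * t) * ‖x 0 - xs‖) ∧
      Filter.Tendsto x Filter.atTop (nhds xs) := by
  have key : ∀ t ≥ (0 : ℝ), ‖x t - xs‖ ≤ Real.exp (-c * t) * ‖x 0 - xs‖ := by
    intro t ht
    -- derivative of the squared distance
    have hderiv : ∀ s ∈ Set.Ico (0 : ℝ) t,
        HasDerivWithinAt (fun u => ⟪x u - xs, x u - xs⟫)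
          (⟪x s - xs, F (x s)⟫ + ⟪F (x s), x s - xs⟫) (Set.Ici s) s := by
      intro s hs
      have hxd : HasDerivWithinAt (fun u => x u - xs) (F (x s)) (Set.Ici s) s :=
        ((hx s hs.1).mono (Set.Ici_subset_Ici.2 hs.1)).sub_const xs
      exact hxd.inner ℝ hxd
    have hcont : ContinuousOn (fun u => ⟪x u - xs, x u - xs⟫) (Set.Icc 0 t) := by
      have hxc : ContinuousOn x (Set.Icc 0 t) := by
        intro s hs
        exact ((hx s hs.1).continuousWithinAt).mono (fun u hu => hu.1)
      exact ((hxc.sub continuousOn_const).inner (hxc.sub continuousOn_const))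
    have bound : ∀ s ∈ Set.Ico (0 : ℝ) t,
        ⟪x s - xs, F (x s)⟫ + ⟪F (x s), x s - xs⟫
          ≤ (-2 * c) * ⟪x s - xs, x s - xs⟫ + 0 := by
      intro s hs
      have h1 : ⟪F (x s) - F xs, x s - xs⟫ ≤ -c * ‖x s - xs‖ ^ 2 := hmono (x s) xs
      rw [hzero, sub_zero] at h1
      rw [real_inner_comm (x s - xs) (F (x s)), real_inner_comm (x s - xs),
        real_inner_self_eq_norm_sq]
      rw [real_inner_comm] at h1
      linarith
    have hg := le_gronwallBound_of_liminf_deriv_right_le hcont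
      (fun s hs r hr => ((hderiv s hs).liminf_right_slope_le hr).mono
        (fun z hz => by simpa [slope_def_field, div_eq_inv_mul] using hz))
      le_rfl bound t (Set.mem_Icc.2 ⟨ht, le_rfl⟩)
    rw [gronwallBound_ε0] at hg
    have hsq : ‖x t - xs‖ ^ 2 ≤ (Real.exp (-c * t) * ‖x 0 - xs‖) ^ 2 := by
      rw [← real_inner_self_eq_norm_sq]
      calc ⟪x t - xs, x t - xs⟫ ≤ ⟪x 0 - xs, x 0 - xs⟫ * Real.exp (-2 * c * (t - 0)) := hg
        _ = (Real.exp (-c * t) * ‖x 0 - xs‖) ^ 2 := by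
            rw [real_inner_self_eq_norm_sq,
              show (-2 * c * (t - 0)) = (-c * t) + (-c * t) by ring, Real.exp_add]
            ring
    have h0 : (0 : ℝ) ≤ Real.exp (-c * t) * ‖x 0 - xs‖ :=
      mul_nonneg (Real.exp_pos _).le (norm_nonneg _)
    nlinarith [norm_nonneg (x t - xs)]
  refine ⟨key, ?_⟩
  have hexp : Filter.Tendsto (fun t : ℝ => Real.exp (-c * t) * ‖x 0 - xs‖)
      Filter.atTop (nhds 0) := by
    have h1 : Filter.Tendsto (fun t : ℝ => -c * t) Filter.atTop Filter.atBot :=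
      (Filter.tendsto_const_mul_atBot_of_neg (neg_neg_iff_pos.2 hc)).2 Filter.tendsto_id
    simpa using (Real.tendsto_exp_atBot.comp h1).mul_const ‖x 0 - xs‖
  rw [tendsto_iff_dist_tendsto_zero]
  refine squeeze_zero' (Filter.eventually_atTop.2 ⟨0, fun t _ => dist_nonneg⟩)
    (Filter.eventually_atTop.2 ⟨0, fun t ht => ?_⟩) hexp
  rw [dist_eq_norm]
  exact key t ht
end

section
/- Let C ⊆ ℝⁿ be a set and let ω : ℝⁿ → ℝⁿ satisfy the strict monotonicity condition ⟨ω(x) - ω(y), x - y⟩ < 0 for all x, y ∈ C with x ≠ y. Suppose x*, y* ∈ C each satisfy the variational inequality: ⟨ω(x*), z - x*⟩ ≤ 0 for all z ∈ C, and ⟨ω(y*), z - y*⟩ ≤ 0 for all z ∈ C. Then x* = y*. -/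
open scoped RealInnerProductSpace

/-- Strict monotonicity of the pseudogradient on `C` implies uniqueness of
solutions of the variational inequality (hence of Nash equilibria). -/
theorem variational_inequality_unique_of_strict_monotone (n : ℕ)
    (C : Set (EuclideanSpace ℝ (Fin n)))
    (ω : EuclideanSpace ℝ (Fin n) → EuclideanSpace ℝ (Fin n))
    (hmono : ∀ x ∈ C, ∀ y ∈ C, x ≠ y → ⟪ω x - ω y, x - y⟫ < 0)
    (xs ys : EuclideanSpace ℝ (Fin n)) (hxs : xs ∈ C) (hys : ys ∈ C)
    (hvx : ∀ z ∈ C, ⟪ω xs, z - xs⟫ ≤ 0) (hvy : ∀ z ∈ C, ⟪ω ys, z - ys⟫ ≤ 0) :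
    xs = ys := by
  by_contra hne
  have h1 := hvx ys hys
  have h2 := hvy xs hxs
  have hm := hmono xs hxs ys hys hne
  rw [inner_sub_left, inner_sub_right, inner_sub_right] at hm
  have : ⟪ω xs, ys - xs⟫ = ⟪ω xs, ys⟫ - ⟪ω xs, xs⟫ := inner_sub_right _ _ _
  have : ⟪ω ys, xs - ys⟫ = ⟪ω ys, xs⟫ - ⟪ω ys, ys⟫ := inner_sub_right _ _ _
  linarith [inner_sub_right (𝕜 := ℝ) (ω xs) ys xs ▸ h1, inner_sub_right (𝕜 := ℝ) (ω ys) xs ys ▸ h2]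
end
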